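/- Define tower : ℕ → ℝ → ℝ by tower 0 t = t and tower (h+1) t = 2^(tower h t). Then for all h and all t ≥ 0, log₂(12) + tower (h+1) (t + log₂ 12) ≤ tower (h+2) (t + log₂ 12 + 1). -/

import Mathlib

noncomputable def tower : ℕ → ℝ → ℝ
  | 0, t => t
  | h + 1, t => (2 : ℝ) ^ (tower h t)

lemma two_rpow_ge (x : ℝ) (hx : 0 ≤ x) : x ≤ (2 : ℝ) ^ x := by
  have h1 : x < (Nat.floor x : ℝ) + 1 := Nat.lt_floor_add_one x
  have h2 : (Nat.floor x : ℝ) + 1 ≤ ((2 ^ Nat.floor x : ℕ) : ℝ) := by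
    exact_mod_cast Nat.lt_two_pow_self (n := Nat.floor x)
  have h3 : ((2 ^ Nat.floor x : ℕ) : ℝ) = (2 : ℝ) ^ ((Nat.floor x : ℕ) : ℝ) := by
    rw [Real.rpow_natCast]; push_cast; ring
  have h4 : (2 : ℝ) ^ ((Nat.floor x : ℕ) : ℝ) ≤ (2 : ℝ) ^ x :=
    Real.rpow_le_rpow_of_exponent_le one_le_two (Nat.floor_le hx)
  linarith

lemma tower_ge_self (h : ℕ) (s : ℝ) (hs : 0 ≤ s) : s ≤ tower h s := by
  induction h with
  | zero => simp [tower]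
  | succ n ih =>
    have h1 : tower n s ≤ (2 : ℝ) ^ (tower n s) := two_rpow_ge _ (le_trans hs ih)
    simpa [tower] using le_trans ih h1

lemma tower_mono (h : ℕ) : Monotone (tower h) := by
  induction h with
  | zero => exact fun a b hab => by simpa [tower] using hab
  | succ n ih =>
    intro a b hab
    simpa [tower] using Real.rpow_le_rpow_of_exponent_le one_le_two (ih hab)

lemma tower_shift (h : ℕ) (s : ℝ) (hs : 0 ≤ s) : tower h s + 1 ≤ tower h (s + 1) := by
  induction h with
  | zero => simp [tower]
  | succ n ih =>
    have h0 : 0 ≤ tower n s := le_trans hs (tower_ge_self n s hs)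
    have h1 : (1 : ℝ) ≤ (2 : ℝ) ^ (tower n s) := Real.one_le_rpow one_le_two h0
    have h2 : (2 : ℝ) ^ (tower n s + 1) ≤ (2 : ℝ) ^ (tower n (s + 1)) :=
      Real.rpow_le_rpow_of_exponent_le one_le_two ih
    have h3 : (2 : ℝ) ^ (tower n s + 1) = 2 * (2 : ℝ) ^ (tower n s) := by
      rw [Real.rpow_add (by norm_num), Real.rpow_one]; ring
    simp only [tower]
    nlinarith

theorem stmt2 (h : ℕ) (t : ℝ) (ht : 0 ≤ t) :
    Real.logb 2 12 + tower (h + 1) (t + Real.logb 2 12) ≤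
      tower (h + 2) (t + Real.logb 2 12 + 1) := by
  set L := Real.logb 2 12 with hL
  have hL3 : (3 : ℝ) ≤ L := by
    rw [hL, Real.le_logb_iff_rpow_le one_lt_two (by norm_num)]
    rw [show (3 : ℝ) = ((3 : ℕ) : ℝ) by norm_num, Real.rpow_natCast]; norm_num
  have hL4 : L ≤ 4 := by
    rw [hL, Real.logb_le_iff_le_rpow one_lt_two (by norm_num)]
    rw [show (4 : ℝ) = ((4 : ℕ) : ℝ) by norm_num, Real.rpow_natCast]; norm_num
  set s := t + L with hs
  have hs0 : 0 ≤ s := by linarith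
  set a := tower h s with ha
  set b := tower h (s + 1) with hb
  have ha3 : 3 ≤ a := le_trans (by linarith) (le_trans (tower_ge_self h s hs0) le_rfl)
  have hab : a + 1 ≤ b := tower_shift h s hs0
  -- tower (h+1) s = 2^a, tower (h+2) (s+1) = 2^(2^b)
  have e1 : tower (h + 1) s = (2 : ℝ) ^ a := rfl
  have e2 : tower (h + 2) (s + 1) = (2 : ℝ) ^ ((2 : ℝ) ^ b) := rfl
  rw [e1, e2]
  have h2a : (2 : ℝ) ^ (a + 1) ≤ (2 : ℝ) ^ b :=
    Real.rpow_le_rpow_of_exponent_le one_le_two hab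
  have h2a' : (2 : ℝ) ^ (a + 1) = 2 * (2 : ℝ) ^ a := by
    rw [Real.rpow_add (by norm_num), Real.rpow_one]; ring
  have hc : (2 : ℝ) ^ ((2 : ℝ) ^ (a + 1)) ≤ (2 : ℝ) ^ ((2 : ℝ) ^ b) :=
    Real.rpow_le_rpow_of_exponent_le one_le_two h2a
  set c := (2 : ℝ) ^ ((2 : ℝ) ^ a) with hcdef
  have hsplit : (2 : ℝ) ^ ((2 : ℝ) ^ (a + 1)) = c * c := by
    rw [hcdef, h2a', two_mul, Real.rpow_add (by norm_num)]
  have hca : (2 : ℝ) ^ a ≤ c := by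
    have := two_rpow_ge ((2 : ℝ) ^ a) (Real.rpow_nonneg (by norm_num) a)
    exact this
  have hc2 : (2 : ℝ) ^ (3 : ℝ) ≤ (2 : ℝ) ^ a :=
    Real.rpow_le_rpow_of_exponent_le one_le_two ha3
  have h8 : (8 : ℝ) ≤ (2 : ℝ) ^ a := by
    have : (2 : ℝ) ^ (3 : ℝ) = 8 := by
      rw [show (3 : ℝ) = ((3 : ℕ) : ℝ) by norm_num, Real.rpow_natCast]; norm_num
    linarith
  have hc8 : (8 : ℝ) ≤ c := le_trans h8 hca
  have : L + (2 : ℝ) ^ a ≤ c * c := by nlinarith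
  linarith [hsplit ▸ hc]
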